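/- Let $U \subseteq \mathbb{C}$ be open, $f : U \to \mathbb{C}$ analytic, $N \in M_n(\mathbb{C})$ a nilpotent Jordan block of size $n$, and $x \in U$ a zero of $f$ of finite multiplicity $p$. Write $n = mp + r$ with $0 \leq r < p$ (Euclidean division). Then $f(xI_n + N)$ is similar to the direct sum of $r$ Jordan blocks of size $m+1$ and $p - r$ Jordan blocks of size $m$. -/

import Mathlib

/-- The nilpotent Jordan block of size `k`. -/
def J (k : ℕ) : Matrix (Fin k) (Fin k) ℂ :=
  fun i j => if (i : ℕ) + 1 = (j : ℕ) then 1 else 0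

/-- Two square complex matrices (over possibly different index types) are similar. -/
def MatSimilar {m n : Type} [Fintype m] [Fintype n] [DecidableEq m] [DecidableEq n]
    (A : Matrix m m ℂ) (B : Matrix n n ℂ) : Prop :=
  ∃ e : m ≃ n, ∃ P : Matrix n n ℂ, IsUnit P ∧ B = P * (A.submatrix e.symm e.symm) * P⁻¹

lemma J_pow_apply (n l : ℕ) (i j : Fin n) :
    ((J n) ^ l) i j = if (i : ℕ) + l = (j : ℕ) then 1 else 0 := by
  induction l generalizing j with
  | zero =>
    simp [Matrix.one_apply, Fin.ext_iff]
  | succ l ih =>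
    rw [pow_succ, Matrix.mul_apply]
    by_cases h : (i : ℕ) + (l + 1) = (j : ℕ)
    · have hlt : (i : ℕ) + l < n := by omega
      rw [Finset.sum_eq_single (⟨(i : ℕ) + l, hlt⟩ : Fin n)]
      · simp [ih, J, h]; omega
      · intro b _ hb
        rw [ih]
        rcases eq_or_ne ((i : ℕ) + l) (b : ℕ) with hh | hh
        · exact absurd (Fin.ext (show (b : ℕ) = (((⟨(i : ℕ) + l, hlt⟩ : Fin n)) : ℕ) from hh.symm)) hb
        · rw [if_neg hh, zero_mul]
      · simp
    · rw [if_neg h]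
      apply Finset.sum_eq_zero
      intro b _
      rw [ih, J]
      by_cases h1 : (i : ℕ) + l = (b : ℕ)
      · simp [h1]; omega
      · simp [h1]

lemma sum_smul_apply (n : ℕ) (c : ℕ → ℂ) (i j : Fin n) :
    (∑ k ∈ Finset.range n, c k • (J n) ^ k) i j
      = if (i : ℕ) ≤ (j : ℕ) then c ((j : ℕ) - (i : ℕ)) else 0 := by
  rw [Matrix.sum_apply]
  simp only [Matrix.smul_apply, J_pow_apply, smul_eq_mul]
  by_cases h : (i : ℕ) ≤ (j : ℕ)
  · rw [if_pos h, Finset.sum_eq_single ((j : ℕ) - (i : ℕ))]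
    · rw [if_pos (by omega)]; ring
    · intro b _ hb; rw [if_neg (by omega), mul_zero]
    · intro hmem; exact absurd (Finset.mem_range.2 (by omega)) hmem
  · rw [if_neg h]
    apply Finset.sum_eq_zero
    intro b _
    rw [if_neg (by omega), mul_zero]

open Polynomial

/-- exponent used in the column scaling -/
def eexp (p m r j : ℕ) : ℕ := (if j % p < r then m else m - 1) - j / p

noncomputable def Amat (n : ℕ) (F : ℂ[X]) : Matrix (Fin n) (Fin n) ℂ :=
  fun i j => if (i : ℕ) ≤ (j : ℕ) then F.coeff ((j : ℕ) - (i : ℕ)) else 0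

noncomputable def Qmat (n p m r : ℕ) (G : ℂ[X]) : Matrix (Fin n) (Fin n) ℂ :=
  fun i j => if (i : ℕ) ≤ (j : ℕ) then
    (G ^ eexp p m r (j : ℕ)).coeff ((j : ℕ) - (i : ℕ)) else 0

lemma eexp_sub (p m r n j : ℕ) (hp : 0 < p) (hr : r < p) (hdiv : n = m * p + r)
    (hj : j < n) (hpj : p ≤ j) : eexp p m r (j - p) = eexp p m r j + 1 := by
  have hs : j % p < p := Nat.mod_lt _ hp
  obtain ⟨t', ht'⟩ : ∃ t', j / p = t' + 1 :=
    ⟨j / p - 1, by have := (Nat.one_le_div_iff hp).2 hpj; omega⟩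
  have hmod := Nat.div_add_mod j p
  have hx : p * (t' + 1) = p * t' + p := by ring
  have hj' : j = p * t' + p + j % p := by rw [ht'] at hmod; omega
  have e1 : j - p = p * t' + j % p := by omega
  have e2 : (j - p) / p = t' := by
    rw [e1, Nat.mul_add_div hp, Nat.div_eq_of_lt hs, add_zero]
  have e3 : (j - p) % p = j % p := by
    rw [e1, Nat.mul_add_mod, Nat.mod_eq_of_lt hs]
  have hbound : p * (t' + 1) < p * (m + 1) := by
    have h2 : m * p + p = p * (m + 1) := by ring
    omega
  have htm : t' + 1 < m + 1 := Nat.lt_of_mul_lt_mul_left hbound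
  have hm2 : ¬ (j % p < r) → t' + 2 ≤ m := by
    intro hcase
    rcases Nat.lt_or_ge (t' + 1) m with h | h
    · omega
    · exfalso
      have hEq : t' + 1 = m := by omega
      have hpe : p * (t' + 1) = p * m := by rw [hEq]
      have hmp : m * p = p * m := Nat.mul_comm m p
      omega
  unfold eexp
  rw [e2, e3, ht']
  by_cases hcase : j % p < r
  · rw [if_pos hcase]; omega
  · rw [if_neg hcase]
    have := hm2 hcase; omega

lemma coeff_mul_left_congr (F₁ F₂ H : ℂ[X]) (d : ℕ)
    (h : ∀ a ≤ d, F₁.coeff a = F₂.coeff a) :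
    (F₁ * H).coeff d = (F₂ * H).coeff d := by
  rw [Polynomial.coeff_mul, Polynomial.coeff_mul]
  refine Finset.sum_congr rfl fun ab hab => ?_
  rw [Finset.HasAntidiagonal.mem_antidiagonal] at hab
  rw [h ab.1 (by omega)]

lemma Amul_apply (n p m r : ℕ) (F G : ℂ[X]) (i j : Fin n) :
    (Amat n F * Qmat n p m r G) i j =
      if (i : ℕ) ≤ (j : ℕ) then (F * G ^ eexp p m r (j : ℕ)).coeff ((j : ℕ) - (i : ℕ))
      else 0 := by
  rw [Matrix.mul_apply]
  simp only [Amat, Qmat]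
  have hcomb : ∀ l : Fin n,
      (if (i : ℕ) ≤ (l : ℕ) then F.coeff ((l : ℕ) - (i : ℕ)) else 0) *
        (if (l : ℕ) ≤ (j : ℕ) then (G ^ eexp p m r (j : ℕ)).coeff ((j : ℕ) - (l : ℕ)) else 0)
      = if (i : ℕ) ≤ (l : ℕ) ∧ (l : ℕ) ≤ (j : ℕ) then
          F.coeff ((l : ℕ) - (i : ℕ)) * (G ^ eexp p m r (j : ℕ)).coeff ((j : ℕ) - (l : ℕ))
        else 0 := by
    intro l; split_ifs with h1 h2 h3 h3 <;> simp_all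
  rw [Finset.sum_congr rfl fun l _ => hcomb l]
  by_cases hij : (i : ℕ) ≤ (j : ℕ)
  · rw [if_pos hij, Polynomial.coeff_mul,
      Finset.Nat.sum_antidiagonal_eq_sum_range_succ_mk]
    rw [Fin.sum_univ_eq_sum_range (fun l =>
      if (i : ℕ) ≤ l ∧ l ≤ (j : ℕ) then
        F.coeff (l - (i : ℕ)) * (G ^ eexp p m r (j : ℕ)).coeff ((j : ℕ) - l)
      else 0) n]
    rw [← Finset.sum_filter]
    refine Finset.sum_nbij' (fun l => l - (i : ℕ)) (fun k => k + (i : ℕ)) ?_ ?_ ?_ ?_ ?_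
    · intro a ha
      simp only [Finset.mem_filter, Finset.mem_range] at ha ⊢
      omega
    · intro b hb
      simp only [Finset.mem_filter, Finset.mem_range] at hb ⊢
      have := j.isLt
      omega
    · intro a ha
      simp only [Finset.mem_filter, Finset.mem_range] at ha
      omega
    · intro b _
      omega
    · intro a ha
      simp only [Finset.mem_filter, Finset.mem_range] at ha
      dsimp only
      rw [show (j : ℕ) - (i : ℕ) - (a - (i : ℕ)) = (j : ℕ) - a from by omega]
  · rw [if_neg hij]
    exact Finset.sum_eq_zero fun l _ => if_neg (by omega)

lemma QJp_apply (n p m r : ℕ) (G : ℂ[X]) (i j : Fin n) :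
    (Qmat n p m r G * (J n) ^ p) i j =
      if p ≤ (j : ℕ) ∧ (i : ℕ) ≤ (j : ℕ) - p then
        (G ^ eexp p m r ((j : ℕ) - p)).coeff ((j : ℕ) - p - (i : ℕ))
      else 0 := by
  rw [Matrix.mul_apply]
  simp only [Qmat, J_pow_apply]
  by_cases hpj : p ≤ (j : ℕ)
  · have hlt : (j : ℕ) - p < n := by have := j.isLt; omega
    rw [Finset.sum_eq_single (⟨(j : ℕ) - p, hlt⟩ : Fin n)]
    · simp only [Fin.val_mk]
      rw [if_pos (show (j : ℕ) - p + p = (j : ℕ) from by omega), mul_one]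
      by_cases hij : (i : ℕ) ≤ (j : ℕ) - p
      · rw [if_pos hij, if_pos ⟨hpj, hij⟩]
      · rw [if_neg hij, if_neg (show ¬(p ≤ (j : ℕ) ∧ (i : ℕ) ≤ (j : ℕ) - p) from
          fun h => hij h.2)]
    · intro b _ hb
      rw [if_neg (show ¬((b : ℕ) + p = (j : ℕ)) from
        fun hc => hb (Fin.ext (show (b : ℕ) = (j : ℕ) - p by omega))), mul_zero]
    · simp
  · rw [if_neg (show ¬(p ≤ (j : ℕ) ∧ (i : ℕ) ≤ (j : ℕ) - p) from fun h => hpj h.1)]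
    exact Finset.sum_eq_zero fun b _ => by
      rw [if_neg (show ¬((b : ℕ) + p = (j : ℕ)) from by omega), mul_zero]

lemma AQ_eq_QJp (n p m r : ℕ) (hp : 0 < p) (hr : r < p) (hdiv : n = m * p + r)
    (F G : ℂ[X]) (hFG : ∀ d, d < n → F.coeff d = (G * X ^ p).coeff d) :
    Amat n F * Qmat n p m r G = Qmat n p m r G * (J n) ^ p := by
  ext i j
  rw [Amul_apply, QJp_apply]
  by_cases hij : (i : ℕ) ≤ (j : ℕ)
  · rw [if_pos hij]
    have hd : (j : ℕ) - (i : ℕ) < n := by have := j.isLt; omega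
    have step1 : (F * G ^ eexp p m r (j : ℕ)).coeff ((j : ℕ) - (i : ℕ))
        = ((G * X ^ p) * G ^ eexp p m r (j : ℕ)).coeff ((j : ℕ) - (i : ℕ)) :=
      coeff_mul_left_congr _ _ _ _ (fun a ha => hFG a (by omega))
    have step2 : (G * X ^ p) * G ^ eexp p m r (j : ℕ)
        = (G ^ (eexp p m r (j : ℕ) + 1)) * X ^ p := by ring
    rw [step1, step2, Polynomial.coeff_mul_X_pow']
    by_cases hc : p ≤ (j : ℕ) - (i : ℕ)
    · rw [if_pos hc, if_pos ⟨by omega, by omega⟩,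
        eexp_sub p m r n (j : ℕ) hp hr hdiv j.isLt (by omega)]
      congr 1
      omega
    · rw [if_neg hc, if_neg (by omega)]
  · rw [if_neg hij, if_neg (by omega)]

lemma Qmat_isUnit (n p m r : ℕ) (G : ℂ[X]) (hG0 : G.coeff 0 ≠ 0) :
    IsUnit (Qmat n p m r G) := by
  rw [Matrix.isUnit_iff_isUnit_det]
  have htri : (Qmat n p m r G).BlockTriangular id := by
    intro i j hij
    exact if_neg (by simp at hij; omega)
  rw [Matrix.det_of_upperTriangular htri]
  refine (Finset.prod_ne_zero_iff.2 fun i _ => ?_).isUnit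
  show Qmat n p m r G i i ≠ 0
  unfold Qmat
  rw [if_pos le_rfl, Nat.sub_self]
  rw [Polynomial.coeff_zero_eq_eval_zero, Polynomial.eval_pow,
    ← Polynomial.coeff_zero_eq_eval_zero]
  exact pow_ne_zero _ hG0

lemma uniq_mod (p s s' t t' : ℕ) (hs : s < p) (hs' : s' < p)
    (h : s + t * p = s' + t' * p) : s = s' ∧ t = t' := by
  have h1 : (s + t * p) % p = s := by
    rw [Nat.add_mul_mod_self_right, Nat.mod_eq_of_lt hs]
  have h2 : (s' + t' * p) % p = s' := by
    rw [Nat.add_mul_mod_self_right, Nat.mod_eq_of_lt hs']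
  have hss : s = s' := by rw [← h1, h, h2]
  refine ⟨hss, ?_⟩
  have htp : t * p = t' * p := by omega
  exact Nat.eq_of_mul_eq_mul_right (by omega) htp

def psi (n p m r : ℕ) (hp : 0 < p) (hr : r < p) (hdiv : n = m * p + r) :
    ((Fin (m + 1) × Fin r) ⊕ (Fin m × Fin (p - r))) ≃ Fin n where
  toFun := fun a => match a with
    | .inl (t, s) => ⟨(s : ℕ) + (t : ℕ) * p, by
        have hs := s.isLt
        have ht : (t : ℕ) ≤ m := by have := t.isLt; omega
        have h2 : (t : ℕ) * p ≤ m * p := Nat.mul_le_mul_right p ht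
        omega⟩
    | .inr (t, s) => ⟨(r + (s : ℕ)) + (t : ℕ) * p, by
        have hs := s.isLt
        have ht : (t : ℕ) + 1 ≤ m := by have := t.isLt; omega
        have h2 : ((t : ℕ) + 1) * p ≤ m * p := Nat.mul_le_mul_right p ht
        have h3 : ((t : ℕ) + 1) * p = (t : ℕ) * p + p := by ring
        omega⟩
  invFun := fun j =>
    if h : (j : ℕ) % p < r then
      .inl (⟨(j : ℕ) / p, by
        rw [Nat.div_lt_iff_lt_mul hp]
        have := j.isLt
        have h3 : (m + 1) * p = m * p + p := by ring
        omega⟩, ⟨(j : ℕ) % p, h⟩)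
    else
      .inr (⟨(j : ℕ) / p, by
        rw [Nat.div_lt_iff_lt_mul hp]
        by_contra hcon
        have hge : m * p ≤ (j : ℕ) := by omega
        have hlt : (j : ℕ) - m * p < r := by have := j.isLt; omega
        have hmm : (j : ℕ) % p = (j : ℕ) - m * p := by
          have hEq : (j : ℕ) = p * m + ((j : ℕ) - m * p) := by
            have : p * m = m * p := Nat.mul_comm p m
            omega
          nth_rewrite 1 [hEq]
          rw [Nat.mul_add_mod, Nat.mod_eq_of_lt (by omega)]
        omega⟩, ⟨(j : ℕ) % p - r, by
        have := Nat.mod_lt (j : ℕ) hp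
        omega⟩)
  left_inv := fun a => by
    match a with
    | .inl (t, s) =>
      have hs : (s : ℕ) < p := by have := s.isLt; omega
      have hmod : ((s : ℕ) + (t : ℕ) * p) % p = (s : ℕ) := by
        rw [Nat.add_mul_mod_self_right, Nat.mod_eq_of_lt hs]
      have hdivv : ((s : ℕ) + (t : ℕ) * p) / p = (t : ℕ) := by
        rw [Nat.add_mul_div_right _ _ hp, Nat.div_eq_of_lt hs, zero_add]
      dsimp only
      rw [dif_pos (show ((s : ℕ) + (t : ℕ) * p) % p < r by rw [hmod]; exact s.isLt)]
      simp only [Sum.inl.injEq, Prod.mk.injEq, Fin.ext_iff]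
      exact ⟨hdivv, hmod⟩
    | .inr (t, s) =>
      have hs : r + (s : ℕ) < p := by have := s.isLt; omega
      have hmod : ((r + (s : ℕ)) + (t : ℕ) * p) % p = r + (s : ℕ) := by
        rw [Nat.add_mul_mod_self_right, Nat.mod_eq_of_lt hs]
      have hdivv : ((r + (s : ℕ)) + (t : ℕ) * p) / p = (t : ℕ) := by
        rw [Nat.add_mul_div_right _ _ hp, Nat.div_eq_of_lt hs, zero_add]
      dsimp only
      rw [dif_neg (show ¬(((r + (s : ℕ)) + (t : ℕ) * p) % p < r) by rw [hmod]; omega)]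
      simp only [Sum.inr.injEq, Prod.mk.injEq, Fin.ext_iff]
      exact ⟨hdivv, by rw [hmod]; omega⟩
  right_inv := fun j => by
    dsimp only
    by_cases h : (j : ℕ) % p < r
    · rw [dif_pos h]
      exact Fin.ext (Nat.mod_add_div' _ _)
    · rw [dif_neg h]
      apply Fin.ext
      show r + ((j : ℕ) % p - r) + (j : ℕ) / p * p = (j : ℕ)
      have h2 : r + ((j : ℕ) % p - r) = (j : ℕ) % p := by omega
      rw [h2]
      exact Nat.mod_add_div' _ _

lemma Jp_submatrix (n p m r : ℕ) (hp : 0 < p) (hr : r < p) (hdiv : n = m * p + r) :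
    ((J n) ^ p).submatrix (psi n p m r hp hr hdiv) (psi n p m r hp hr hdiv) =
      Matrix.fromBlocks (Matrix.blockDiagonal fun _ : Fin r => J (m + 1)) 0 0
        (Matrix.blockDiagonal fun _ : Fin (p - r) => J m) := by
  ext a b
  rcases a with ⟨t, s⟩ | ⟨t, s⟩ <;> rcases b with ⟨t', s'⟩ | ⟨t', s'⟩ <;>
    simp only [Matrix.submatrix_apply, J_pow_apply, psi, Equiv.coe_fn_mk,
      Matrix.fromBlocks_apply₁₁, Matrix.fromBlocks_apply₁₂, Matrix.fromBlocks_apply₂₁,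
      Matrix.fromBlocks_apply₂₂, Matrix.blockDiagonal_apply, Matrix.zero_apply, J]
  · -- inl inl
    by_cases h : (s : ℕ) + (t : ℕ) * p + p = (s' : ℕ) + (t' : ℕ) * p
    · obtain ⟨h1, h2⟩ := uniq_mod p s s' ((t : ℕ) + 1) t'
        (by omega) (by omega) (by have hx3 : ((t : ℕ) + 1) * p = (t : ℕ) * p + p := Nat.succ_mul _ _; omega)
      rw [if_pos h, if_pos (Fin.ext h1 : s = s'), if_pos h2]
    · rw [if_neg h]
      by_cases hss : s = s'
      · rw [if_pos hss]
        by_cases htt : (t : ℕ) + 1 = (t' : ℕ)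
        · exfalso
          apply h
          have : (s : ℕ) = (s' : ℕ) := congrArg Fin.val hss
          have hx : ((t:ℕ)+1)*p = (t:ℕ)*p + p := by ring
          have hy : ((t:ℕ)+1)*p = (t':ℕ)*p := by rw [htt]
          omega
        · rw [if_neg htt]
      · rw [if_neg hss]
  · -- inl inr
    rw [if_neg]
    intro h
    obtain ⟨h1, h2⟩ := uniq_mod p s (r + (s' : ℕ)) ((t : ℕ) + 1) t'
      (by omega) (by have := s'.isLt; omega)
      (by have hx3 : ((t : ℕ) + 1) * p = (t : ℕ) * p + p := Nat.succ_mul _ _; omega)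
    have := s.isLt
    omega
  · -- inr inl
    rw [if_neg]
    intro h
    obtain ⟨h1, h2⟩ := uniq_mod p (r + (s : ℕ)) s' ((t : ℕ) + 1) t'
      (by have := s.isLt; omega) (by omega)
      (by have hx3 : ((t : ℕ) + 1) * p = (t : ℕ) * p + p := Nat.succ_mul _ _; omega)
    have := s'.isLt
    omega
  · -- inr inr
    by_cases h : r + (s : ℕ) + (t : ℕ) * p + p = r + (s' : ℕ) + (t' : ℕ) * p
    · obtain ⟨h1, h2⟩ := uniq_mod p (r + (s : ℕ)) (r + (s' : ℕ)) ((t : ℕ) + 1) t'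
        (by have := s.isLt; omega) (by have := s'.isLt; omega)
        (by have hx3 : ((t : ℕ) + 1) * p = (t : ℕ) * p + p := Nat.succ_mul _ _; omega)
      rw [if_pos h, if_pos (Fin.ext (by omega : (s : ℕ) = (s' : ℕ)) : s = s'), if_pos h2]
    · rw [if_neg h]
      by_cases hss : s = s'
      · rw [if_pos hss]
        by_cases htt : (t : ℕ) + 1 = (t' : ℕ)
        · exfalso
          apply h
          have : (s : ℕ) = (s' : ℕ) := congrArg Fin.val hss
          have hx : ((t:ℕ)+1)*p = (t:ℕ)*p + p := by ring
          have hy : ((t:ℕ)+1)*p = (t':ℕ)*p := by rw [htt]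
          omega
        · rw [if_neg htt]
      · rw [if_neg hss]

lemma poly_coeff (n : ℕ) (c : ℕ → ℂ) (d : ℕ) :
    (∑ k ∈ Finset.range n, Polynomial.C (c k) * Polynomial.X ^ k).coeff d
      = if d < n then c d else 0 := by
  rw [Polynomial.finset_sum_coeff]
  simp only [Polynomial.coeff_C_mul, Polynomial.coeff_X_pow]
  by_cases h : d < n
  · rw [if_pos h, Finset.sum_eq_single d]
    · rw [if_pos rfl, mul_one]
    · intro b _ hb
      rw [if_neg (fun hh => hb hh.symm), mul_zero]
    · intro hd
      exact absurd (Finset.mem_range.2 h) hd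
  · rw [if_neg h]
    exact Finset.sum_eq_zero fun b hb => by
      rw [if_neg (by simp only [Finset.mem_range] at hb; omega), mul_zero]

open Filter in
lemma analyticAt_deriv' {g : ℂ → ℂ} {x : ℂ} (h : AnalyticAt ℂ g x) :
    AnalyticAt ℂ (deriv g) x := by
  obtain ⟨s, hs, hsa⟩ := h.eventually_analyticAt.exists_mem
  exact (AnalyticOnNhd.deriv (fun y hy => hsa y hy)) x (mem_of_mem_nhds hs)

open Filter in
lemma key_zero_order (x : ℂ) : ∀ p : ℕ, ∀ f g : ℂ → ℂ, AnalyticAt ℂ g x →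
    (∀ᶠ z in nhds x, f z = (z - x) ^ p * g z) →
    (∀ k < p, iteratedDeriv k f x = 0) ∧ iteratedDeriv p f x = p.factorial * g x := by
  intro p
  induction p with
  | zero =>
    intro f g hg hev
    refine ⟨fun k hk => absurd hk (by omega), ?_⟩
    simpa using hev.self_of_nhds
  | succ p ih =>
    intro f g hg hev
    set g1 : ℂ → ℂ := fun z => (p + 1 : ℂ) * g z + (z - x) * deriv g z with hg1
    have hg1a : AnalyticAt ℂ g1 x := by
      apply AnalyticAt.add
      · exact (analyticAt_const).mul hg
      · exact ((analyticAt_id.sub analyticAt_const)).mul (analyticAt_deriv' hg)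
    have hd : ∀ᶠ z in nhds x, deriv f z = (z - x) ^ p * g1 z := by
      have h1 : deriv f =ᶠ[nhds x] deriv (fun z => (z - x) ^ (p+1) * g z) :=
        Filter.EventuallyEq.deriv hev
      filter_upwards [h1, hg.eventually_analyticAt] with z h1z h2z
      rw [h1z]
      have hD := (((hasDerivAt_id z).sub_const x).pow (p+1)).mul
        h2z.differentiableAt.hasDerivAt
      simp only [id_eq] at hD
      rw [show (fun z => (z - x) ^ (p + 1) * g z) = ((fun x_1 => x_1 - x) ^ (p + 1) * g) from rfl,
        hD.deriv, hg1]
      simp only [Nat.add_sub_cancel, Pi.pow_apply]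
      push_cast
      ring
    obtain ⟨ihz, ihp⟩ := ih (deriv f) g1 hg1a hd
    have hfx : f x = 0 := by
      have := hev.self_of_nhds
      simpa using this
    constructor
    · intro k hk
      match k with
      | 0 => simpa using hfx
      | (k+1) => rw [iteratedDeriv_succ']; exact ihz k (by omega)
    · rw [iteratedDeriv_succ', ihp, hg1]
      simp only [Nat.factorial_succ]
      push_cast
      ring

/-- If `f` is analytic on an open set `U`, `x ∈ U` is a zero of `f` of finite
multiplicity `p` (i.e. `f = (· - x)^p * g` with `g` analytic, `g x ≠ 0`), and
`n = m*p + r` with `0 ≤ r < p`, then `f(x Iₙ + J n) = ∑ₖ f⁽ᵏ⁾(x)/k! (J n)ᵏ` is similar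
to the direct sum of `r` Jordan blocks of size `m+1` and `p - r` Jordan blocks of
size `m`. -/
theorem stmt12 (U : Set ℂ) (hU : IsOpen U) (f g : ℂ → ℂ)
    (hf : AnalyticOnNhd ℂ f U) (hg : AnalyticOnNhd ℂ g U) (x : ℂ) (hx : x ∈ U)
    (p : ℕ) (hp : 0 < p) (hgx : g x ≠ 0)
    (hfac : ∀ z ∈ U, f z = (z - x) ^ p * g z)
    (n m r : ℕ) (hn : 0 < n) (hdiv : n = m * p + r) (hr : r < p) :
    MatSimilar
      (∑ k ∈ Finset.range n, (iteratedDeriv k f x / (k.factorial : ℂ)) • (J n) ^ k)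
      (Matrix.fromBlocks
        (Matrix.blockDiagonal fun _ : Fin r => J (m + 1)) 0 0
        (Matrix.blockDiagonal fun _ : Fin (p - r) => J m)) := by
  classical
  have hev : ∀ᶠ z in nhds x, f z = (z - x) ^ p * g z :=
    Filter.eventually_of_mem (hU.mem_nhds hx) hfac
  obtain ⟨hvan, hcp⟩ := key_zero_order x p f g (hg x hx) hev
  set c : ℕ → ℂ := fun k => iteratedDeriv k f x / (k.factorial : ℂ) with hc
  have hc0 : ∀ k, k < p → c k = 0 := by
    intro k hk
    rw [hc]
    simp only [hvan k hk, zero_div]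
  have hfacne : ((p.factorial : ℂ)) ≠ 0 := by
    exact_mod_cast Nat.cast_ne_zero.2 p.factorial_ne_zero
  have hcpv : c p = g x := by
    rw [hc]
    field_simp [hcp]
    exact hcp
  set F : Polynomial ℂ := ∑ k ∈ Finset.range n, Polynomial.C (c k) * Polynomial.X ^ k with hF
  set G : Polynomial ℂ :=
    ∑ k ∈ Finset.range n, Polynomial.C (c (p + k)) * Polynomial.X ^ k with hG
  have hFc : ∀ d, F.coeff d = if d < n then c d else 0 := poly_coeff n c
  have hGc : ∀ d, G.coeff d = if d < n then c (p + d) else 0 := poly_coeff n fun k => c (p + k)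
  have hFG : ∀ d, d < n → F.coeff d = (G * Polynomial.X ^ p).coeff d := by
    intro d hd
    rw [hFc, Polynomial.coeff_mul_X_pow', if_pos hd]
    by_cases hpd : p ≤ d
    · rw [if_pos hpd, hGc, if_pos (by omega)]
      congr 1
      omega
    · rw [if_neg hpd, hc0 d (by omega)]
  have hG0 : G.coeff 0 ≠ 0 := by
    rw [hGc, if_pos hn]
    simpa [hcpv] using hgx
  have hA : (∑ k ∈ Finset.range n, (iteratedDeriv k f x / (k.factorial : ℂ)) • (J n) ^ k)
      = Amat n F := by
    ext i j
    rw [show (∑ k ∈ Finset.range n, (iteratedDeriv k f x / (k.factorial : ℂ)) • (J n) ^ k)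
        = ∑ k ∈ Finset.range n, c k • (J n) ^ k from rfl]
    rw [sum_smul_apply]
    unfold Amat
    by_cases hij : (i : ℕ) ≤ (j : ℕ)
    · rw [if_pos hij, if_pos hij, hFc, if_pos (by have := j.isLt; omega)]
    · rw [if_neg hij, if_neg hij]
  set ψ := psi n p m r hp hr hdiv with hψ
  set Q := Qmat n p m r G with hQ
  have hQu : IsUnit Q := Qmat_isUnit n p m r G hG0
  have hAQ : Amat n F * Q = Q * (J n) ^ p := AQ_eq_QJp n p m r hp hr hdiv F G hFG
  have hQdet : IsUnit Q.det := (Matrix.isUnit_iff_isUnit_det Q).1 hQu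
  have hQQ : Q * Q⁻¹ = 1 := Matrix.mul_nonsing_inv Q hQdet
  have hQQ' : Q⁻¹ * Q = 1 := Matrix.nonsing_inv_mul Q hQdet
  have hAdecomp : Amat n F = Q * ((J n) ^ p) * Q⁻¹ := by
    calc Amat n F = Amat n F * (Q * Q⁻¹) := by rw [hQQ, mul_one]
    _ = (Amat n F * Q) * Q⁻¹ := by rw [mul_assoc]
    _ = Q * (J n) ^ p * Q⁻¹ := by rw [hAQ]
  set Q' := Q.submatrix ψ ψ with hQ'
  set R' := (Q⁻¹).submatrix ψ ψ with hR'
  have hQ'R' : Q' * R' = 1 := by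
    rw [hQ', hR', Matrix.submatrix_mul_equiv, hQQ, Matrix.submatrix_one_equiv]
  have hR'Q' : R' * Q' = 1 := by
    rw [hQ', hR', Matrix.submatrix_mul_equiv, hQQ', Matrix.submatrix_one_equiv]
  have hR'u : IsUnit R' := by
    have := invertibleOfRightInverse _ _ hR'Q'
    exact isUnit_of_invertible R'
  have hR'inv : R'⁻¹ = Q' := Matrix.inv_eq_right_inv hR'Q'
  refine ⟨ψ.symm, R', hR'u, ?_⟩
  rw [Equiv.symm_symm, hA, hAdecomp, hR'inv]
  have hsub : (Q * ((J n) ^ p) * Q⁻¹).submatrix ⇑ψ ⇑ψ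
      = Q' * (((J n) ^ p).submatrix ⇑ψ ⇑ψ) * R' := by
    rw [hQ', hR', Matrix.submatrix_mul_equiv, Matrix.submatrix_mul_equiv]
  rw [hsub, Jp_submatrix n p m r hp hr hdiv]
  set T := Matrix.fromBlocks
      (Matrix.blockDiagonal fun _ : Fin r => J (m + 1)) 0 0
      (Matrix.blockDiagonal fun _ : Fin (p - r) => J m) with hT
  calc T = 1 * T * 1 := by rw [one_mul, mul_one]
  _ = (R' * Q') * T * (R' * Q') := by rw [hR'Q']
  _ = R' * (Q' * T * R') * Q' := by noncomm_ring
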